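/- Let H be a complex Hilbert space, S a set, and K : S × S → B(H) a positive definite operator-valued kernel. Then there exist a complex Hilbert space L and a family of bounded linear operators V_s : H → L (s ∈ S) such that K(s,t) = V_s* ∘ V_t for all s, t ∈ S. -/

import Mathlib

open scoped InnerProductSpace ComplexOrder

namespace Stmt2Aux

universe u_1 u_2

variable {H : Type u_1} [NormedAddCommGroup H] [InnerProductSpace ℂ H]
variable {S : Type u_2} (K : S → S → H →L[ℂ] H)

/-- Positive definiteness hypothesis. -/
def PD : Prop :=
  ∀ (n : ℕ) (s : Fin n → S) (a : Fin n → H),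
      0 ≤ ∑ i, ∑ j, (⟪a i, K (s i) (s j) (a j)⟫_ℂ)

/-- The pre-inner-product on finitely supported `H`-valued functions on `S`. -/
noncomputable def B (f g : S →₀ H) : ℂ :=
  f.sum fun s a => g.sum fun t b => ⟪a, K s t b⟫_ℂ

theorem B_add_left (f f' g : S →₀ H) : B K (f + f') g = B K f g + B K f' g := by
  unfold B
  rw [Finsupp.sum_add_index' (fun s => by simp) (fun s a a' => ?_)]
  rw [← Finsupp.sum_add]
  exact Finsupp.sum_congr fun t _ => by rw [inner_add_left]

theorem B_add_right (f g g' : S →₀ H) : B K f (g + g') = B K f g + B K f g' := by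
  unfold B
  rw [← Finsupp.sum_add]
  refine Finsupp.sum_congr fun s _ => ?_
  rw [Finsupp.sum_add_index' (fun t => by simp) (fun t b b' => by simp [inner_add_right])]

theorem B_smul_left (c : ℂ) (f g : S →₀ H) :
    B K (c • f) g = (starRingEnd ℂ) c * B K f g := by
  unfold B
  rw [Finsupp.sum_smul_index' (fun s => by simp)]
  simp only [inner_smul_left, Finsupp.sum, Finset.mul_sum]

theorem B_smul_right (c : ℂ) (f g : S →₀ H) : B K f (c • g) = c * B K f g := by
  unfold B
  have hs : ∀ (s : S) (a : H),
      ((c • g).sum fun t b => (⟪a, K s t b⟫_ℂ)) = c * g.sum fun t b => (⟪a, K s t b⟫_ℂ) := by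
    intro s a
    rw [Finsupp.sum_smul_index' (fun t => by simp)]
    simp only [map_smul, inner_smul_right, Finsupp.sum, Finset.mul_sum]
  rw [Finsupp.sum_congr (g2 := fun s a => c * g.sum fun t b => (⟪a, K s t b⟫_ℂ))
    fun s _ => hs s (f s)]
  simp only [Finsupp.sum, Finset.mul_sum]

theorem B_nonneg (hK : PD K) (f : S →₀ H) : 0 ≤ B K f f := by
  classical
  set e := f.support.equivFin.symm with he
  have h := hK f.support.card (fun i => (e i : S)) (fun i => f (e i))
  refine le_of_le_of_eq h ?_
  calc
    ∑ i, ∑ j, (⟪f (e i), K (e i : S) (e j : S) (f (e j))⟫_ℂ)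
        = ∑ x : f.support, ∑ y : f.support, (⟪f x, K (x : S) (y : S) (f y)⟫_ℂ) := by
          refine Fintype.sum_equiv e _ _ fun i => ?_
          exact Fintype.sum_equiv e _ _ fun j => rfl
    _ = ∑ x ∈ f.support, ∑ y ∈ f.support, (⟪f x, K x y (f y)⟫_ℂ) := by
          rw [← Finset.sum_coe_sort f.support
            (fun x => ∑ y ∈ f.support, (⟪f x, K x y (f y)⟫_ℂ))]
          exact Finset.sum_congr rfl fun x _ =>
            Finset.sum_coe_sort f.support (fun y => (⟪f x, K x y (f y)⟫_ℂ))
    _ = B K f f := rfl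

theorem B_im_self (hK : PD K) (f : S →₀ H) : (B K f f).im = 0 :=
  ((Complex.nonneg_iff.mp (B_nonneg K hK f)).2).symm

theorem B_conj_symm (hK : PD K) (f g : S →₀ H) :
    (starRingEnd ℂ) (B K g f) = B K f g := by
  have h1 : (B K (f + g) (f + g)).im = 0 := B_im_self K hK _
  have h2 : (B K (f + Complex.I • g) (f + Complex.I • g)).im = 0 := B_im_self K hK _
  have hf := B_im_self K hK f
  have hg := B_im_self K hK g
  simp only [B_add_left, B_add_right, B_smul_left, B_smul_right] at h1 h2
  set z := B K f g
  set w := B K g f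
  simp only [Complex.add_im, Complex.add_re, Complex.mul_im, Complex.mul_re,
    Complex.conj_re, Complex.conj_im, Complex.I_re, Complex.I_im, hf, hg] at h1 h2
  apply Complex.ext <;>
    simp only [Complex.conj_re, Complex.conj_im] <;> linarith

theorem B_eq_zero_left (hK : PD K) {f : S →₀ H} (hf : B K f f = 0) (g : S →₀ H) :
    B K g f = 0 := by
  by_contra hne
  set c := B K g f with hc
  have hc2 : 0 < Complex.normSq c := Complex.normSq_pos.mpr hne
  set r : ℝ := ((B K g g).re + 1) / (2 * Complex.normSq c) with hr
  have hpos := B_nonneg K hK (g + (-(r : ℂ) * (starRingEnd ℂ) c) • f)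
  have hexp : B K (g + (-(r : ℂ) * (starRingEnd ℂ) c) • f)
        (g + (-(r : ℂ) * (starRingEnd ℂ) c) • f)
      = B K g g - ((2 * r * Complex.normSq c : ℝ) : ℂ) := by
    simp only [B_add_left, B_add_right, B_smul_left, B_smul_right]
    rw [hf, ← B_conj_symm K hK f g]
    simp only [map_mul, map_neg, Complex.conj_conj, Complex.conj_ofReal, mul_zero, add_zero]
    rw [Complex.ofReal_mul, Complex.ofReal_mul, Complex.normSq_eq_conj_mul_self]
    push_cast
    ring
  rw [hexp] at hpos
  have h := (Complex.nonneg_iff.mp hpos).1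
  rw [Complex.sub_re, Complex.ofReal_re] at h
  have h2 : 2 * r * Complex.normSq c = (B K g g).re + 1 := by
    rw [hr]; field_simp
  rw [h2] at h
  linarith

theorem B_eq_zero_right (hK : PD K) {f : S →₀ H} (hf : B K f f = 0) (g : S →₀ H) :
    B K f g = 0 := by
  rw [← B_conj_symm K hK f g, B_eq_zero_left K hK hf g, map_zero]

/-- The pre-inner-product as a sesquilinear map. -/
noncomputable def Bl : (S →₀ H) →ₛₗ[starRingEnd ℂ] (S →₀ H) →ₗ[ℂ] ℂ :=
  LinearMap.mk₂'ₛₗ (starRingEnd ℂ) (RingHom.id ℂ) (B K)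
    (B_add_left K) (fun c f g => by rw [B_smul_left]; rfl)
    (B_add_right K) (fun c f g => by rw [B_smul_right]; rfl)

instance : RingHomSurjective (starRingEnd ℂ) :=
  ⟨fun z => ⟨(starRingEnd ℂ) z, by simp⟩⟩

/-- The null space. -/
noncomputable def N : Submodule ℂ (S →₀ H) := LinearMap.ker (Bl K)

/-- The quotient pre-Hilbert space. -/
abbrev Q := (S →₀ H) ⧸ N K

theorem mem_N_iff (f : S →₀ H) : f ∈ N K ↔ ∀ g, B K f g = 0 := by
  constructor
  · intro h g
    have hb : Bl K f = 0 := h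
    simpa [Bl, LinearMap.mk₂'ₛₗ_apply] using congrArg (fun φ => φ g) hb
  · intro h
    show Bl K f = 0
    refine LinearMap.ext fun g => ?_
    simpa [Bl, LinearMap.mk₂'ₛₗ_apply] using h g

/-- First-stage lift of the form. -/
noncomputable def Bl' (hK : PD K) : (S →₀ H) →ₛₗ[starRingEnd ℂ] (Q K →ₗ[ℂ] ℂ) where
  toFun f := (N K).liftQ (Bl K f)
    (by
      intro g hg
      have hg' : ∀ h, B K g h = 0 := (mem_N_iff K g).mp hg
      simp only [LinearMap.mem_ker, Bl, LinearMap.mk₂'ₛₗ_apply]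
      rw [← B_conj_symm K hK f g, hg' f, map_zero])
  map_add' f f' := by
    refine LinearMap.ext fun x => ?_
    obtain ⟨g, rfl⟩ := Submodule.Quotient.mk_surjective _ x
    simp [Submodule.liftQ_apply, Bl, LinearMap.mk₂'ₛₗ_apply, B_add_left]
  map_smul' c f := by
    refine LinearMap.ext fun x => ?_
    obtain ⟨g, rfl⟩ := Submodule.Quotient.mk_surjective _ x
    simp [Submodule.liftQ_apply, Bl, LinearMap.mk₂'ₛₗ_apply, B_smul_left]

/-- The inner product on the quotient. -/
noncomputable def Bq (hK : PD K) : Q K →ₛₗ[starRingEnd ℂ] (Q K →ₗ[ℂ] ℂ) :=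
  (N K).liftQ (Bl' K hK)
    (by
      intro f hf
      have hf' : ∀ g, B K f g = 0 := (mem_N_iff K f).mp hf
      refine LinearMap.ext fun x => ?_
      obtain ⟨g, rfl⟩ := Submodule.Quotient.mk_surjective _ x
      simpa [Bl', Submodule.liftQ_apply, Bl, LinearMap.mk₂'ₛₗ_apply] using hf' g)

theorem Bq_mk_mk (hK : PD K) (f g : S →₀ H) :
    Bq K hK (Submodule.Quotient.mk f) (Submodule.Quotient.mk g) = B K f g := by
  simp [Bq, Bl', Submodule.liftQ_apply, Bl, LinearMap.mk₂'ₛₗ_apply]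

/-- The inner-product-space core structure on the quotient. -/
noncomputable def coreQ (hK : PD K) : InnerProductSpace.Core ℂ (Q K) where
  inner x y := Bq K hK x y
  conj_inner_symm x y := by
    obtain ⟨f, rfl⟩ := Submodule.Quotient.mk_surjective _ x
    obtain ⟨g, rfl⟩ := Submodule.Quotient.mk_surjective _ y
    show (starRingEnd ℂ) (Bq K hK (Submodule.Quotient.mk g) (Submodule.Quotient.mk f))
      = Bq K hK (Submodule.Quotient.mk f) (Submodule.Quotient.mk g)
    rw [Bq_mk_mk, Bq_mk_mk]
    exact B_conj_symm K hK f g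
  re_inner_nonneg x := by
    obtain ⟨f, rfl⟩ := Submodule.Quotient.mk_surjective _ x
    show 0 ≤ RCLike.re (Bq K hK (Submodule.Quotient.mk f) (Submodule.Quotient.mk f))
    rw [Bq_mk_mk]
    simpa [RCLike.re_to_complex] using (Complex.nonneg_iff.mp (B_nonneg K hK f)).1
  add_left x y z := by
    show Bq K hK (x + y) z = Bq K hK x z + Bq K hK y z
    rw [map_add]; rfl
  smul_left x y r := by
    show Bq K hK (r • x) y = (starRingEnd ℂ) r * Bq K hK x y
    rw [map_smulₛₗ]; rfl
  definite x hx := by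
    obtain ⟨f, rfl⟩ := Submodule.Quotient.mk_surjective _ x
    have hx' : B K f f = 0 := by
      rw [← Bq_mk_mk K hK f f]; exact hx
    rw [Submodule.Quotient.mk_eq_zero]
    exact (mem_N_iff K f).mpr (B_eq_zero_right K hK hx')

theorem B_single_single (s t : S) (a b : H) :
    B K (Finsupp.single s a) (Finsupp.single t b) = ⟪a, K s t b⟫_ℂ := by
  unfold B
  rw [Finsupp.sum_single_index (by simp), Finsupp.sum_single_index (by simp)]

end Stmt2Aux

/-- Every positive definite operator-valued kernel `K : S × S → B(H)` factors
as `K(s,t) = V_s* ∘ V_t` for a family of bounded operators `V_s : H → L` into some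
complex Hilbert space `L`. -/
theorem stmt_2 {H : Type*} [NormedAddCommGroup H] [InnerProductSpace ℂ H] [CompleteSpace H]
    {S : Type*} (K : S → S → H →L[ℂ] H)
    (hK : ∀ (n : ℕ) (s : Fin n → S) (a : Fin n → H),
      0 ≤ ∑ i, ∑ j, (⟪a i, K (s i) (s j) (a j)⟫_ℂ)) :
    ∃ (L : Type (max u_1 u_2)) (_ : NormedAddCommGroup L) (_ : InnerProductSpace ℂ L)
      (_ : CompleteSpace L) (V : S → H →L[ℂ] L),
      ∀ s t, K s t = (ContinuousLinearMap.adjoint (V s)).comp (V t) := by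
  classical
  have hK' : Stmt2Aux.PD K := hK
  letI cQ : InnerProductSpace.Core ℂ (Stmt2Aux.Q K) := Stmt2Aux.coreQ K hK'
  letI : NormedAddCommGroup (Stmt2Aux.Q K) :=
    @InnerProductSpace.Core.toNormedAddCommGroup ℂ _ _ _ _ cQ
  letI : InnerProductSpace ℂ (Stmt2Aux.Q K) := InnerProductSpace.ofCore cQ.toCore
  have hinner : ∀ f g : S →₀ H,
      (⟪(Submodule.Quotient.mk f : Stmt2Aux.Q K), Submodule.Quotient.mk g⟫_ℂ)
        = Stmt2Aux.B K f g := fun f g => Stmt2Aux.Bq_mk_mk K hK' f g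
  let lin : S → (H →ₗ[ℂ] Stmt2Aux.Q K) := fun s =>
    { toFun := fun a => Submodule.Quotient.mk (Finsupp.single s a)
      map_add' := fun a b => by simp [Finsupp.single_add]
      map_smul' := fun c a => by
        show Submodule.Quotient.mk (Finsupp.single s (c • a))
          = c • Submodule.Quotient.mk (Finsupp.single s a)
        rw [← Finsupp.smul_single, ← Submodule.Quotient.mk_smul] }
  have hlin : ∀ s a, lin s a = Submodule.Quotient.mk (Finsupp.single s a) := fun _ _ => rfl
  have hbound : ∀ s a, ‖lin s a‖ ≤ Real.sqrt ‖K s s‖ * ‖a‖ := by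
    intro s a
    have h1 : RCLike.re (⟪lin s a, lin s a⟫_ℂ) = ‖lin s a‖ ^ 2 := inner_self_eq_norm_sq _
    have h2 : (⟪lin s a, lin s a⟫_ℂ) = ⟪a, K s s a⟫_ℂ := by
      rw [hlin, hinner, Stmt2Aux.B_single_single]
    have h3 : ‖lin s a‖ ^ 2 ≤ ‖K s s‖ * ‖a‖ ^ 2 := by
      rw [← h1, h2]
      calc RCLike.re (⟪a, K s s a⟫_ℂ) ≤ |RCLike.re (⟪a, K s s a⟫_ℂ)| := le_abs_self _
        _ ≤ ‖(⟪a, K s s a⟫_ℂ)‖ := RCLike.abs_re_le_norm _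
        _ ≤ ‖a‖ * ‖K s s a‖ := norm_inner_le_norm _ _
        _ ≤ ‖a‖ * (‖K s s‖ * ‖a‖) := by
            refine mul_le_mul_of_nonneg_left ?_ (norm_nonneg _)
            exact (K s s).le_opNorm a
        _ = ‖K s s‖ * ‖a‖ ^ 2 := by ring
    calc ‖lin s a‖ = Real.sqrt (‖lin s a‖ ^ 2) := (Real.sqrt_sq (norm_nonneg _)).symm
      _ ≤ Real.sqrt (‖K s s‖ * ‖a‖ ^ 2) := Real.sqrt_le_sqrt h3
      _ = Real.sqrt ‖K s s‖ * ‖a‖ := by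
          rw [Real.sqrt_mul (norm_nonneg _), Real.sqrt_sq (norm_nonneg _)]
  let Vq : S → (H →L[ℂ] Stmt2Aux.Q K) := fun s =>
    LinearMap.mkContinuous (lin s) (Real.sqrt ‖K s s‖) (hbound s)
  refine ⟨UniformSpace.Completion (Stmt2Aux.Q K), inferInstance, inferInstance, inferInstance,
    fun s => (UniformSpace.Completion.toComplL).comp (Vq s), fun s t => ?_⟩
  ext a
  refine ext_inner_left ℂ fun b => ?_
  rw [ContinuousLinearMap.comp_apply, ContinuousLinearMap.adjoint_inner_right]
  show (⟪b, K s t a⟫_ℂ)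
      = ⟪((Vq s b : Stmt2Aux.Q K) : UniformSpace.Completion (Stmt2Aux.Q K)),
          ((Vq t a : Stmt2Aux.Q K) : UniformSpace.Completion (Stmt2Aux.Q K))⟫_ℂ
  rw [UniformSpace.Completion.inner_coe]
  have hv : ∀ (u : S) (x : H), (Vq u x : Stmt2Aux.Q K)
      = Submodule.Quotient.mk (Finsupp.single u x) := fun _ _ => rfl
  rw [hv, hv, hinner, Stmt2Aux.B_single_single]
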